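/- There exists a constant A > 0, depending only on Γ, α, ν, u₀, e₀, such that for every c = (c₁, c₂) ∈ ℝ² with c₂ ≤ −A, one has c ∉ 𝒞; that is, the maximal solution of the profile ODE for such c does not remain defined with u > 0 and e > 0 on all of [0,1]. -/

import Mathlib

noncomputable section

/-- `(u, e)` solves the profile ODE
`u′ = (u₀/α)(c₁ + u + Γ e/u)`, `e′ = (u₀/ν)(c₂ − c₁ u − u²/2 + e)`
on the set `S`, with initial data `u 0 = u₀`, `e 0 = e₀`. -/
def IsProfileSol (Γ α ν u₀ e₀ : ℝ) (c : ℝ × ℝ) (u e : ℝ → ℝ) (S : Set ℝ) : Prop :=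
  u 0 = u₀ ∧ e 0 = e₀ ∧
  ∀ x ∈ S,
    HasDerivWithinAt u ((u₀ / α) * (c.1 + u x + Γ * e x / u x)) S x ∧
    HasDerivWithinAt e ((u₀ / ν) * (c.2 - c.1 * u x - (u x) ^ 2 / 2 + e x)) S x

/-- The feasible set 𝒞: the set of constants of integration `c` for which the solution of
the profile ODE is defined on `[0,1]` with `u > 0` and `e > 0` on `[0,1]`. -/
def Feasible (Γ α ν u₀ e₀ : ℝ) : Set (ℝ × ℝ) :=
  {c | ∃ u e : ℝ → ℝ,
    IsProfileSol Γ α ν u₀ e₀ c u e (Set.Icc 0 1) ∧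
    ∀ x ∈ Set.Icc (0:ℝ) 1, 0 < u x ∧ 0 < e x}

set_option maxHeartbeats 800000 in
/-- There is `A > 0` depending only on `Γ, α, ν, u₀, e₀` such that `c₂ ≤ -A` implies `c ∉ 𝒞`. -/
theorem stmt7 (Γ α ν u₀ e₀ : ℝ) (hΓ : 0 < Γ) (hα : 0 < α) (hν : 0 < ν)
    (hu₀ : 0 < u₀) (he₀ : 0 < e₀) :
    ∃ A > (0:ℝ), ∀ c : ℝ × ℝ, c.2 ≤ -A → c ∉ Feasible Γ α ν u₀ e₀ := by
  set K : ℝ := max (1/α) ((1+Γ)/ν) with hKdef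
  have hKα : 1 ≤ K * α := by
    have h1 : 1/α ≤ K := le_max_left _ _
    rw [div_le_iff₀ hα] at h1; linarith
  have hKν : 1 + Γ ≤ K * ν := by
    have h1 : (1+Γ)/ν ≤ K := le_max_right _ _
    rw [div_le_iff₀ hν] at h1; linarith
  have hKpos : 0 < K := lt_max_of_lt_left (by positivity)
  clear_value K
  set G0 : ℝ := ν * e₀ + α * u₀^2 / 2 with hG0def
  have hG0pos : 0 < G0 := by rw [hG0def]; positivity
  clear_value G0
  refine ⟨(G0 + 1) * Real.exp (u₀ * K) / u₀, by positivity, ?_⟩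
  rintro c hc2 ⟨u, e, ⟨hu0, he0, hder⟩, hpos⟩
  set S : Set ℝ := Set.Icc (0:ℝ) 1 with hSdef
  set G : ℝ → ℝ := fun x => ν * e x + α * (u x)^2 / 2 with hGdef
  set F : ℝ → ℝ := fun x => G x * Real.exp (-(u₀*K) * x) + (G0+1) * x with hFdef
  clear_value G F
  -- derivative of F within S
  have hFderiv : ∀ x ∈ S, HasDerivWithinAt F
      (u₀ * (c.2 + (u x)^2/2 + (1+Γ) * e x) * Real.exp (-(u₀*K)*x)
        + G x * (Real.exp (-(u₀*K)*x) * (-(u₀*K))) + (G0+1)) S x := by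
    intro x hx
    obtain ⟨hu', he'⟩ := hder x hx
    have hux : u x ≠ 0 := (hpos x hx).1.ne'
    have hGd : HasDerivWithinAt G (u₀ * (c.2 + (u x)^2/2 + (1+Γ) * e x)) S x := by
      rw [hGdef]
      have h1 : HasDerivWithinAt (fun x => ν * e x + α * (u x)^2 / 2)
          (ν * ((u₀ / ν) * (c.2 - c.1 * u x - (u x) ^ 2 / 2 + e x))
            + α * ((2:ℕ) * (u x)^(2-1) * ((u₀ / α) * (c.1 + u x + Γ * e x / u x))) / 2)
          S x := ((he'.const_mul ν).add (((hu'.pow 2).const_mul α).div_const 2))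
      convert h1 using 1
      field_simp
      ring
    have hexp : HasDerivAt (fun y : ℝ => Real.exp (-(u₀*K) * y))
        (Real.exp (-(u₀*K) * x) * (-(u₀*K) * 1)) x :=
      ((hasDerivAt_id x).const_mul (-(u₀*K))).exp
    have hlin : HasDerivAt (fun y : ℝ => (G0+1) * y) ((G0+1) * 1) x :=
      (hasDerivAt_id x).const_mul (G0+1)
    rw [hFdef]
    have := (hGd.mul hexp.hasDerivWithinAt).add hlin.hasDerivWithinAt
    exact this.congr_deriv (by ring)
  -- the derivative is nonpositive
  have hDle : ∀ x ∈ S,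
      u₀ * (c.2 + (u x)^2/2 + (1+Γ) * e x) * Real.exp (-(u₀*K)*x)
        + G x * (Real.exp (-(u₀*K)*x) * (-(u₀*K))) + (G0+1) ≤ 0 := by
    intro x hx
    have hux := (hpos x hx).1
    have hex := (hpos x hx).2
    have hx0 : (0:ℝ) ≤ x := hx.1
    have hx1 : x ≤ 1 := hx.2
    set E : ℝ := Real.exp (-(u₀*K)*x) with hEdef
    clear_value E
    have hEpos : 0 < E := by rw [hEdef]; positivity
    have hEge : Real.exp (-(u₀*K)) ≤ E := by
      rw [hEdef]
      apply Real.exp_le_exp.2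
      have : u₀ * K * x ≤ u₀ * K := by nlinarith [mul_pos hu₀ hKpos]
      linarith
    -- quadratic form bound : u²/2 + (1+Γ)e ≤ K * G
    have hquad : (u x)^2/2 + (1+Γ) * e x ≤ K * G x := by
      have h1 : (u x)^2/2 ≤ K * (α * (u x)^2 / 2) := by nlinarith [sq_nonneg (u x)]
      have h2 : (1+Γ) * e x ≤ K * (ν * e x) := by nlinarith
      simp only [hGdef]; nlinarith
    -- c₂ contribution
    have hc2' : u₀ * c.2 * E ≤ -(G0+1) := by
      have hA : u₀ * c.2 ≤ -((G0+1) * Real.exp (u₀ * K)) := by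
        have : c.2 ≤ -((G0 + 1) * Real.exp (u₀ * K) / u₀) := hc2
        calc u₀ * c.2 ≤ u₀ * (-((G0 + 1) * Real.exp (u₀ * K) / u₀)) := by
              exact mul_le_mul_of_nonneg_left this hu₀.le
          _ = -((G0+1) * Real.exp (u₀ * K)) := by field_simp
      have hex1 : Real.exp (u₀*K) * Real.exp (-(u₀*K)) = 1 := by
        rw [← Real.exp_add]; simp
      have hstep : u₀ * c.2 * E ≤ -((G0+1) * Real.exp (u₀*K)) * Real.exp (-(u₀*K)) := by
        have hneg : u₀ * c.2 ≤ 0 := le_trans hA (neg_nonpos.2 (by positivity))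
        nlinarith [Real.exp_pos (-(u₀*K))]
      calc u₀ * c.2 * E ≤ -((G0+1) * Real.exp (u₀*K)) * Real.exp (-(u₀*K)) := hstep
        _ = -((G0+1) * (Real.exp (u₀*K) * Real.exp (-(u₀*K)))) := by ring
        _ = -(G0+1) := by rw [hex1]; ring
    have h3 : u₀ * ((u x)^2/2 + (1+Γ) * e x) * E ≤ u₀ * (K * G x) * E :=
      mul_le_mul_of_nonneg_right (mul_le_mul_of_nonneg_left hquad hu₀.le) hEpos.le
    have hexpand : u₀ * (c.2 + (u x)^2/2 + (1+Γ) * e x) * E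
        + G x * (E * (-(u₀*K))) + (G0+1)
        = u₀ * c.2 * E + u₀ * ((u x)^2/2 + (1+Γ) * e x) * E - u₀ * (K * G x) * E + (G0+1) := by
      ring
    rw [hexpand]
    linarith
  -- F is antitone on S
  have hCont : ContinuousOn F S := fun x hx => ((hFderiv x hx).continuousWithinAt)
  have hAnti : AntitoneOn F S := by
    apply antitoneOn_of_deriv_nonpos (convex_Icc 0 1) hCont
    · intro x hx
      rw [interior_Icc] at hx
      have hmem : Set.Icc (0:ℝ) 1 ∈ nhds x := Icc_mem_nhds hx.1 hx.2
      exact ((hFderiv x (Set.mem_Icc_of_Ioo hx)).hasDerivAt hmem).differentiableAt.differentiableWithinAt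
    · intro x hx
      rw [interior_Icc] at hx
      have hxS : x ∈ S := Set.mem_Icc_of_Ioo hx
      have hmem : Set.Icc (0:ℝ) 1 ∈ nhds x := Icc_mem_nhds hx.1 hx.2
      rw [((hFderiv x hxS).hasDerivAt hmem).deriv]
      exact hDle x hxS
  have h01 : F 1 ≤ F 0 := hAnti (Set.mem_Icc.2 ⟨le_refl 0, by norm_num⟩)
    (Set.mem_Icc.2 ⟨by norm_num, le_refl 1⟩) (by norm_num)
  have hF0 : F 0 = G0 := by
    simp only [hFdef, hGdef, hG0def, hu0, he0]
    norm_num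
  have hF1 : G0 + 1 < F 1 := by
    have h1S : (1:ℝ) ∈ S := Set.mem_Icc.2 ⟨by norm_num, le_refl 1⟩
    have hG1 : 0 < G 1 := by
      obtain ⟨h1u, h1e⟩ := hpos 1 h1S
      simp only [hGdef]
      have hq : 0 ≤ α * (u 1)^2 / 2 := by positivity
      linarith [mul_pos hν h1e]
    have h2 : 0 < G 1 * Real.exp (-(u₀*K) * 1) := mul_pos hG1 (Real.exp_pos _)
    simp only [hFdef]
    linarith
  rw [hF0] at h01
  linarith
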